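/- Let X be a nontrivial complex Banach space and G ⊆ X a bounded balanced domain. For every r₀ with 3 − 2√2 < r₀ < 1 there exist a holomorphic function f : G → ℂ with values in the slit region T = ℂ \ (−∞, 0], with f(0) > 0 and power series expansion f(x) = f(0) + Σ_{m≥1} (1/m!) D^m f(0)(x^m) at 0, and a point x ∈ r₀·G such that Σ_{m≥1} |(1/m!) D^m f(0)(x^m)| > f(0). Hence the constant 3 − 2√2 in the Bohr inequality for H(G, T) is best possible. -/

import Mathlib

open scoped Pointwise

private lemma bohr_aux_ne {w : ℂ} (hw : ‖w‖ < 1) : (1 : ℂ) + w ≠ 0 := by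
  intro h
  have hw1 : w = -1 := by linear_combination h
  rw [hw1] at hw; simp at hw

private lemma bohr_aux_slit {w : ℂ} (hw : ‖w‖ < 1) :
    ((1 - w) / (1 + w)) ^ 2 ∈ Complex.slitPlane := by
  have h1 : (1 : ℂ) + w ≠ 0 := bohr_aux_ne hw
  have hnsq : Complex.normSq w < 1 := by
    have h := Complex.sq_norm w
    have habs : ‖w‖ < 1 := hw
    nlinarith [Complex.normSq_nonneg w, norm_nonneg w]
  have hre : 0 < ((1 - w) / (1 + w)).re := by
    rw [Complex.div_re, ← add_div]
    apply div_pos _ (Complex.normSq_pos.2 h1)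
    have hns : Complex.normSq w = w.re * w.re + w.im * w.im := Complex.normSq_apply w
    simp only [Complex.sub_re, Complex.add_re, Complex.sub_im, Complex.add_im,
      Complex.one_re, Complex.one_im]
    nlinarith
  rw [Complex.mem_slitPlane_iff]
  set z : ℂ := (1 - w) / (1 + w) with hzdef
  rcases eq_or_ne z.im 0 with him | him
  · left
    rw [sq, Complex.mul_re, him]
    simpa using mul_pos hre hre
  · right
    rw [sq, Complex.mul_im]
    have h2 : z.re * z.im + z.im * z.re = 2 * (z.re * z.im) := by ring
    rw [h2]
    exact mul_ne_zero two_ne_zero (mul_ne_zero hre.ne' him)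

private lemma bohr_aux_hasSum {w : ℂ} (hw : ‖w‖ < 1) :
    HasSum (fun n : ℕ => (if n = 0 then 1 else 4 * n * (-1) ^ n : ℂ) * w ^ n)
      (((1 - w) / (1 + w)) ^ 2) := by
  have h1 : (1 : ℂ) + w ≠ 0 := bohr_aux_ne hw
  have hnw : ‖-w‖ < 1 := by simpa using hw
  have H := (hasSum_coe_mul_geometric_of_norm_lt_one hnw).mul_left 4
  have H0 : HasSum (fun n : ℕ => if n = 0 then (1 : ℂ) else 0) 1 := hasSum_ite_eq 0 1
  have key := H.add H0
  have e1 : (fun n : ℕ => 4 * ((n : ℂ) * (-w) ^ n) + (if n = 0 then (1 : ℂ) else 0))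
      = fun n : ℕ => (if n = 0 then 1 else 4 * n * (-1) ^ n : ℂ) * w ^ n := by
    funext n
    rcases eq_or_ne n 0 with h | h
    · subst h; simp
    · rw [if_neg h, if_neg h, neg_pow]
      ring
  have e2 : 4 * (-w / (1 - -w) ^ 2) + 1 = ((1 - w) / (1 + w)) ^ 2 := by
    have h2 : (1 : ℂ) - -w = 1 + w := by ring
    rw [h2]
    field_simp
    ring
  rw [e1, e2] at key
  exact key

set_option maxHeartbeats 1000000 in
/-- Sharpness of the constant `3 - 2√2` in Bohr's theorem for holomorphic maps
from a bounded balanced domain `G` of a nontrivial complex Banach space into the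
slit region `T = ℂ \ (-∞, 0]`: for any `3 - 2√2 < r₀ < 1` there are `f ∈ H(G, T)`
with `f(0) > 0` and `x ∈ r₀·G` whose Bohr sum of nonconstant terms exceeds `f(0)`. -/
theorem bohr_slitPlane_sharp {X : Type*} [NormedAddCommGroup X] [NormedSpace ℂ X]
    [CompleteSpace X] [Nontrivial X]
    (G : Set X) (hGopen : IsOpen G) (hGconn : IsConnected G)
    (hGbdd : Bornology.IsBounded G)
    (hGbal : ∀ z : ℂ, ‖z‖ ≤ 1 → z • G ⊆ G)
    (r₀ : ℝ) (hr₀ : 3 - 2 * Real.sqrt 2 < r₀) (hr₀' : r₀ < 1) :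
    ∃ (f : X → ℂ) (p : FormalMultilinearSeries ℂ X ℂ),
      DifferentiableOn ℂ f G ∧ Set.MapsTo f G Complex.slitPlane ∧
      (f 0).im = 0 ∧ 0 < (f 0).re ∧
      HasFPowerSeriesAt f p 0 ∧
      ∃ x ∈ (r₀ : ℂ) • G,
        Summable (fun m : ℕ => ‖p (m + 1) (fun _ => x)‖) ∧
        (f 0).re < ∑' m : ℕ, ‖p (m + 1) (fun _ => x)‖ := by
  -- numeric facts
  have hs2 : Real.sqrt 2 ^ 2 = 2 := Real.sq_sqrt (by norm_num)
  have hs2pos : 0 < Real.sqrt 2 := Real.sqrt_pos.2 (by norm_num)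
  have hs2lt : Real.sqrt 2 < 3 / 2 := by nlinarith
  have hkey_pos : 0 < 3 - 2 * Real.sqrt 2 := by nlinarith
  have hr₀pos : 0 < r₀ := lt_trans hkey_pos hr₀
  -- 0 ∈ G and a small ball around it inside G
  obtain ⟨y0, hy0⟩ := hGconn.nonempty
  have h0G : (0 : X) ∈ G := by
    have h := hGbal 0 (by simp) (Set.smul_mem_smul_set (a := (0 : ℂ)) hy0)
    simpa using h
  obtain ⟨ε, hεpos, hball⟩ := Metric.isOpen_iff.1 hGopen 0 h0G
  -- a nonzero functional
  obtain ⟨v, hv⟩ := exists_ne (0 : X)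
  have hvn : 0 < ‖v‖ := norm_pos_iff.2 hv
  obtain ⟨φ₀, hφ₀n, hφ₀v⟩ := exists_dual_vector ℂ v hvn.ne'
  -- the sup of ‖φ₀‖ on G
  set S : Set ℝ := (fun x => ‖φ₀ x‖) '' G with hSdef
  have hSne : S.Nonempty := ⟨_, ⟨0, h0G, rfl⟩⟩
  have hbddS : BddAbove S := by
    obtain ⟨R, hR⟩ := isBounded_iff_forall_norm_le.1 hGbdd
    refine ⟨R, ?_⟩
    rintro _ ⟨x, hx, rfl⟩
    calc ‖φ₀ x‖ ≤ ‖φ₀‖ * ‖x‖ := φ₀.le_opNorm x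
    _ ≤ 1 * R := by
        apply mul_le_mul (le_of_eq hφ₀n) (hR x hx) (norm_nonneg x) zero_le_one
    _ = R := one_mul R
  set a := sSup S with ha
  have hapos : 0 < a := by
    set u0 : X := ((ε / 2 / ‖v‖ : ℝ) : ℂ) • v with hu0def
    have hu0pos : (0 : ℝ) < ε / 2 / ‖v‖ := by positivity
    have hu0G : u0 ∈ G := by
      apply hball
      have hn0 : ‖u0‖ = ε / 2 / ‖v‖ * ‖v‖ := by
        rw [hu0def, norm_smul, Complex.norm_real, Real.norm_eq_abs, abs_of_pos hu0pos]
      rw [Metric.mem_ball, dist_zero_right, hn0, div_mul_cancel₀ _ hvn.ne']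
      linarith
    have hval : ‖φ₀ u0‖ = ε / 2 := by
      rw [hu0def, map_smul, norm_smul, hφ₀v]
      simp only [Complex.norm_real, RCLike.norm_ofReal, Real.norm_eq_abs, abs_norm]
      rw [abs_of_pos hu0pos, div_mul_cancel₀ _ hvn.ne']
    have hle : ε / 2 ≤ a := by
      rw [← hval]
      exact le_csSup hbddS ⟨u0, hu0G, rfl⟩
    linarith
  -- parameters s < β < 1
  set s : ℝ := (3 - 2 * Real.sqrt 2) / r₀ with hsdef
  have hspos : 0 < s := div_pos hkey_pos hr₀pos
  have hs1 : s < 1 := (div_lt_one hr₀pos).2 hr₀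
  set β : ℝ := (s + 1) / 2 with hβdef
  have hsβ : s < β := by rw [hβdef]; linarith
  have hβ1 : β < 1 := by rw [hβdef]; linarith
  have hβpos : 0 < β := lt_trans hspos hsβ
  have hβa : 0 < β / a := div_pos hβpos hapos
  -- choose u ∈ G with ‖φ₀ u‖ > a * (s / β)
  have hlt : a * (s / β) < a := by
    have h1 : s / β < 1 := (div_lt_one hβpos).2 hsβ
    calc a * (s / β) < a * 1 := mul_lt_mul_of_pos_left h1 hapos
    _ = a := mul_one a
  obtain ⟨_, ⟨u, huG, rfl⟩, hu⟩ := exists_lt_of_lt_csSup hSne hlt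
  -- the scaled functional
  set φ : X →L[ℂ] ℂ := ((β / a : ℝ) : ℂ) • φ₀ with hφdef
  have hφapp : ∀ x : X, ‖φ x‖ = β / a * ‖φ₀ x‖ := by
    intro x
    rw [hφdef, ContinuousLinearMap.smul_apply, norm_smul, Complex.norm_real,
      Real.norm_eq_abs, abs_of_pos hβa]
  have hφle : ∀ x ∈ G, ‖φ x‖ ≤ β := by
    intro x hx
    have h1 : ‖φ₀ x‖ ≤ a := le_csSup hbddS ⟨x, hx, rfl⟩
    rw [hφapp]
    calc β / a * ‖φ₀ x‖ ≤ β / a * a := mul_le_mul_of_nonneg_left h1 hβa.le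
    _ = β := div_mul_cancel₀ _ hapos.ne'
  have hφu : s < ‖φ u‖ := by
    rw [hφapp]
    have h2 : β / a * (a * (s / β)) < β / a * ‖φ₀ u‖ :=
      mul_lt_mul_of_pos_left hu hβa
    have h3 : β / a * (a * (s / β)) = s := by
      field_simp
    rw [h3] at h2
    exact h2
  -- coefficients, series, function
  set c : ℕ → ℂ := fun n => if n = 0 then 1 else 4 * n * (-1) ^ n with hcdef
  set p : FormalMultilinearSeries ℂ X ℂ := fun n =>
    c n • (ContinuousMultilinearMap.mkPiAlgebra ℂ (Fin n) ℂ).compContinuousLinearMap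
      (fun _ => φ) with hpdef
  set f : X → ℂ := fun x => ((1 - φ x) / (1 + φ x)) ^ 2 with hfdef
  have hpeval : ∀ (n : ℕ) (x : X), (p n fun _ => x) = c n * (φ x) ^ n := by
    intro n x
    simp only [hpdef]
    simp [ContinuousMultilinearMap.smul_apply,
      ContinuousMultilinearMap.compContinuousLinearMap_apply,
      ContinuousMultilinearMap.mkPiAlgebra_apply, Finset.prod_const, smul_eq_mul]
  have hcval : ∀ n : ℕ, 0 < n → ‖c n‖ = 4 * n := by
    intro n hn
    simp only [hcdef, if_neg hn.ne']
    rw [norm_mul, norm_pow, norm_neg, norm_one, one_pow, mul_one, norm_mul]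
    simp
  have hcle : ∀ n : ℕ, ‖c n‖ ≤ 4 * n + 1 := by
    intro n
    rcases Nat.eq_zero_or_pos n with h | h
    · subst h; simp only [hcdef]; simp
    · rw [hcval n h]; linarith [Nat.cast_nonneg (α := ℝ) n]
  have hpn : ∀ n : ℕ, ‖p n‖ ≤ (4 * n + 1) * ‖φ‖ ^ n := by
    intro n
    have hM : ‖(ContinuousMultilinearMap.mkPiAlgebra ℂ (Fin n)
        ℂ).compContinuousLinearMap (fun _ => φ)‖ ≤ ‖φ‖ ^ n := by
      have h2 := ContinuousMultilinearMap.norm_compContinuousLinearMap_le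
        (ContinuousMultilinearMap.mkPiAlgebra ℂ (Fin n) ℂ) (fun _ : Fin n => φ)
      rw [ContinuousMultilinearMap.norm_mkPiAlgebra, one_mul, Finset.prod_const,
        Finset.card_univ, Fintype.card_fin] at h2
      exact h2
    have h1 : ‖p n‖ ≤ ‖c n‖ * ‖φ‖ ^ n := by
      simp only [hpdef]
      refine le_trans (ContinuousMultilinearMap.opNorm_smul_le _ _) ?_
      exact mul_le_mul_of_nonneg_left hM (norm_nonneg _)
    refine h1.trans ?_
    exact mul_le_mul_of_nonneg_right (hcle n) (by positivity)
  -- differentiability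
  have hdiff : DifferentiableOn ℂ f G := by
    intro x hx
    apply DifferentiableAt.differentiableWithinAt
    have hwx : ‖φ x‖ < 1 := lt_of_le_of_lt (hφle x hx) hβ1
    have h₁ : DifferentiableAt ℂ (fun y : X => 1 - φ y) x :=
      (differentiableAt_const 1).sub φ.differentiableAt
    have h₂ : DifferentiableAt ℂ (fun y : X => 1 + φ y) x :=
      (differentiableAt_const 1).add φ.differentiableAt
    simp only [hfdef, div_eq_mul_inv]
    exact (h₁.mul (h₂.inv (bohr_aux_ne hwx))).pow 2
  -- maps into the slit plane
  have hmaps : Set.MapsTo f G Complex.slitPlane := by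
    intro x hx
    have hw : ‖φ x‖ < 1 := lt_of_le_of_lt (hφle x hx) hβ1
    have hfx : f x = ((1 - φ x) / (1 + φ x)) ^ 2 := by simp only [hfdef]
    show f x ∈ Complex.slitPlane
    rw [hfx]
    exact bohr_aux_slit hw
  -- value at 0
  have hf0 : f 0 = 1 := by simp only [hfdef]; simp
  -- power series at 0
  have hφ1pos : (0 : ℝ) < ‖φ‖ + 1 := by positivity
  set ρ : NNReal := ⟨1 / (‖φ‖ + 1), by positivity⟩ with hρdef
  have hρcoe : (ρ : ℝ) = 1 / (‖φ‖ + 1) := rfl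
  have hρpos : 0 < ρ := by
    rw [← NNReal.coe_pos, hρcoe]; positivity
  have hθ : ‖φ‖ * ρ < 1 := by
    rw [hρcoe, mul_one_div, div_lt_one hφ1pos]; linarith
  have hθ0 : (0 : ℝ) ≤ ‖φ‖ * ρ := by positivity
  have hfp : HasFPowerSeriesAt f p 0 := by
    refine ⟨ρ, ?_, ?_, ?_⟩
    · -- the radius of p is at least ρ
      apply p.le_radius_of_summable
      have hsum : Summable (fun n : ℕ => 4 * (n : ℝ) * (‖φ‖ * ρ) ^ n + (‖φ‖ * ρ) ^ n) := by
        have h1 : Summable (fun n : ℕ => (n : ℝ) ^ 1 * (‖φ‖ * ρ) ^ n) :=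
          summable_pow_mul_geometric_of_norm_lt_one 1
            (by rw [Real.norm_eq_abs, abs_of_nonneg hθ0]; exact hθ)
        have h2 : Summable (fun n : ℕ => (‖φ‖ * ρ) ^ n) :=
          summable_geometric_of_lt_one hθ0 hθ
        have h3 := (h1.mul_left 4).add h2
        refine h3.congr fun n => ?_
        ring
      refine hsum.of_nonneg_of_le (fun n => by positivity) fun n => ?_
      calc ‖p n‖ * (ρ : ℝ) ^ n ≤ (4 * n + 1) * ‖φ‖ ^ n * (ρ : ℝ) ^ n :=
            mul_le_mul_of_nonneg_right (hpn n) (by positivity)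
      _ = 4 * (n : ℝ) * (‖φ‖ * ρ) ^ n + (‖φ‖ * ρ) ^ n := by
            rw [mul_pow]; ring
    · exact_mod_cast hρpos
    · intro y hy
      have hy' : ‖y‖ < (ρ : ℝ) := by
        rw [EMetric.mem_ball, edist_zero_right] at hy
        exact_mod_cast hy
      have hw : ‖φ y‖ < 1 := by
        calc ‖φ y‖ ≤ ‖φ‖ * ‖y‖ := φ.le_opNorm y
        _ ≤ ‖φ‖ * ρ := mul_le_mul_of_nonneg_left hy'.le (norm_nonneg _)
        _ < 1 := hθ
      have H := bohr_aux_hasSum hw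
      have e : (fun n : ℕ => p n fun _ => y) = fun n : ℕ => c n * (φ y) ^ n := by
        funext n; exact hpeval n y
      rw [zero_add, e]
      have hfy : f y = ((1 - φ y) / (1 + φ y)) ^ 2 := by simp only [hfdef]
      rw [hfy]
      simp only [hcdef]
      exact H
  -- the point x = r₀ • u
  set x : X := (r₀ : ℂ) • u with hxdef
  have hxmem : x ∈ (r₀ : ℂ) • G := Set.smul_mem_smul_set huG
  set t : ℝ := ‖φ x‖ with htdef
  have ht_eq : t = r₀ * ‖φ u‖ := by
    rw [htdef, hxdef, map_smul, norm_smul, Complex.norm_real, Real.norm_eq_abs,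
      abs_of_pos hr₀pos]
  have ht_lb : 3 - 2 * Real.sqrt 2 < t := by
    rw [ht_eq]
    have h1 : r₀ * s < r₀ * ‖φ u‖ := mul_lt_mul_of_pos_left hφu hr₀pos
    have h2 : r₀ * s = 3 - 2 * Real.sqrt 2 := by
      rw [hsdef]; field_simp
    linarith
  have ht_pos : 0 < t := lt_trans hkey_pos ht_lb
  have ht_ub : t < 1 := by
    rw [ht_eq]
    have h1 : ‖φ u‖ ≤ β := hφle u huG
    nlinarith
  have hterm : ∀ m : ℕ, ‖p (m + 1) fun _ => x‖ = 4 * ((m : ℝ) + 1) * t ^ (m + 1) := by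
    intro m
    rw [hpeval, norm_mul, norm_pow, hcval (m + 1) (Nat.succ_pos m)]
    push_cast
    rw [htdef]
  have htn : ‖t‖ < 1 := by rw [Real.norm_eq_abs, abs_of_pos ht_pos]; exact ht_ub
  have H := hasSum_coe_mul_geometric_of_norm_lt_one (𝕜 := ℝ) htn
  have Hsh : HasSum (fun m : ℕ => ((m + 1 : ℕ) : ℝ) * t ^ (m + 1)) (t / (1 - t) ^ 2) := by
    refine (hasSum_nat_add_iff (f := fun n : ℕ => (n : ℝ) * t ^ n) 1).2 ?_
    simpa using H
  have H4 : HasSum (fun m : ℕ => 4 * ((m : ℝ) + 1) * t ^ (m + 1)) (4 * (t / (1 - t) ^ 2)) := by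
    have e : (fun m : ℕ => 4 * ((m : ℝ) + 1) * t ^ (m + 1))
        = fun m : ℕ => 4 * (((m + 1 : ℕ) : ℝ) * t ^ (m + 1)) := by
      funext m
      push_cast
      ring
    rw [e]
    exact Hsh.mul_left 4
  have hfun : (fun m : ℕ => ‖p (m + 1) fun _ => x‖)
      = fun m : ℕ => 4 * ((m : ℝ) + 1) * t ^ (m + 1) := funext hterm
  refine ⟨f, p, hdiff, hmaps, by rw [hf0]; simp, by rw [hf0]; simp, hfp,
    x, hxmem, ?_, ?_⟩
  · rw [hfun]; exact H4.summable
  · rw [hfun, H4.tsum_eq, hf0, Complex.one_re]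
    have h1t : 0 < (1 - t) ^ 2 := pow_pos (by linarith) 2
    rw [mul_div_assoc', lt_div_iff₀ h1t]
    nlinarith [mul_pos (show (0 : ℝ) < t - (3 - 2 * Real.sqrt 2) by linarith)
      (show (0 : ℝ) < 3 + 2 * Real.sqrt 2 - t by nlinarith)]
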